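/- Let (X,b,c,m) be a weighted graph, E a Hermitian vector bundle over X with unitary connection Φ, and W a pointwise positive bundle endomorphism such that ⟨W(x)v,v⟩_x ≥ c(x)|v|²_x for all x ∈ X and v ∈ E_x. If the space C_c(X) of finitely supported functions is dense in the domain of Q^(N)_{b,c} with respect to the form norm of Q^(N)_{b,c} (i.e. Q^(D)_{b,c} = Q^(N)_{b,c}), then the space Γ_c(X;E) of finitely supported sections is dense in the domain of Q^(N)_{Φ,b,W} with respect to the form norm of Q^(N)_{Φ,b,W} (i.e. Q^(D)_{Φ,b,W} = Q^(N)_{Φ,b,W}). -/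

import Mathlib

open scoped ENNReal ComplexInnerProductSpace Classical

noncomputable section

/-- `u` is an `ℓ²`-section with respect to the vertex measure `m`. -/
def MemL2Sec {X : Type*} {E : X → Type*} [∀ x, NormedAddCommGroup (E x)]
    (m : X → ℝ) (u : ∀ x, E x) : Prop :=
  Summable fun x => ‖u x‖ ^ 2 * m x

/-- The magnetic Schrödinger energy `Q̃_{Φ,b,W}(u) ∈ [0,∞]` of a section `u`. -/
def magEnergy {X : Type*} {E : X → Type*} [∀ x, NormedAddCommGroup (E x)]
    [∀ x, InnerProductSpace ℂ (E x)]
    (b : X → X → ℝ) (Φ : ∀ x y, E y ≃ₗᵢ[ℂ] E x) (W : ∀ x, E x →ₗ[ℂ] E x)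
    (u : ∀ x, E x) : ℝ≥0∞ :=
  1 / 2 * ∑' p : X × X, ENNReal.ofReal (b p.1 p.2 * ‖u p.1 - Φ p.1 p.2 (u p.2)‖ ^ 2)
    + ∑' x, ENNReal.ofReal (⟪W x (u x), u x⟫).re

/-- The scalar Schrödinger energy `Q̃_{b,c}(f) ∈ [0,∞]` of a function `f : X → ℂ`. -/
def scalEnergy {X : Type*} (b : X → X → ℝ) (c : X → ℝ) (f : X → ℂ) : ℝ≥0∞ :=
  1 / 2 * ∑' p : X × X, ENNReal.ofReal (b p.1 p.2 * ‖f p.1 - f p.2‖ ^ 2)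
    + ∑' x, ENNReal.ofReal (c x * ‖f x‖ ^ 2)

/-- Membership in the domain of the Neumann magnetic form `Q^(N)_{Φ,b,W}`. -/
def inMagDom {X : Type*} {E : X → Type*} [∀ x, NormedAddCommGroup (E x)]
    [∀ x, InnerProductSpace ℂ (E x)] (m : X → ℝ)
    (b : X → X → ℝ) (Φ : ∀ x y, E y ≃ₗᵢ[ℂ] E x) (W : ∀ x, E x →ₗ[ℂ] E x)
    (u : ∀ x, E x) : Prop :=
  MemL2Sec m u ∧ magEnergy b Φ W u < ⊤

/-- Membership in the domain of the Neumann scalar form `Q^(N)_{b,c}`. -/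
def inScalDom {X : Type*} (m : X → ℝ) (b : X → X → ℝ) (c : X → ℝ) (f : X → ℂ) : Prop :=
  (Summable fun x => ‖f x‖ ^ 2 * m x) ∧ scalEnergy b c f < ⊤

end

noncomputable section

/-- The squared form norm `‖u‖² + Q̃_{Φ,b,W}(u)` of the magnetic form, valued in `[0,∞]`. -/
def magFormNormSq {X : Type*} {E : X → Type*} [∀ x, NormedAddCommGroup (E x)]
    [∀ x, InnerProductSpace ℂ (E x)] (m : X → ℝ)
    (b : X → X → ℝ) (Φ : ∀ x y, E y ≃ₗᵢ[ℂ] E x) (W : ∀ x, E x →ₗ[ℂ] E x)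
    (u : ∀ x, E x) : ℝ≥0∞ :=
  (∑' x, ENNReal.ofReal (‖u x‖ ^ 2 * m x)) + magEnergy b Φ W u

/-- The squared form norm `‖f‖² + Q̃_{b,c}(f)` of the scalar form, valued in `[0,∞]`. -/
def scalFormNormSq {X : Type*} (m : X → ℝ) (b : X → X → ℝ) (c : X → ℝ)
    (f : X → ℂ) : ℝ≥0∞ :=
  (∑' x, ENNReal.ofReal (‖f x‖ ^ 2 * m x)) + scalEnergy b c f

end

section Aux

lemma lemA (A B a b' : ℝ) (hA : 0 ≤ A) (hB : 0 ≤ B) (ha : 0 ≤ a) (hb : 0 ≤ b') :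
    |B * min A a - A * min B b'| ≤ A * |a - b'| + min A a * |A - B| := by
  rcases min_cases A a with ⟨hm1, h1⟩ | ⟨hm1, h1⟩ <;>
  rcases min_cases B b' with ⟨hm2, h2⟩ | ⟨hm2, h2⟩ <;>
  rcases abs_cases (a - b') with ⟨h3, h3'⟩ | ⟨h3, h3'⟩ <;>
  rcases abs_cases (A - B) with ⟨h4, h4'⟩ | ⟨h4, h4'⟩ <;>
  rw [hm1, hm2, h3, h4, abs_le] <;> constructor <;> nlinarith

lemma lemB (A B a b' : ℝ) (hA : 0 < A) (hB : 0 ≤ B) (ha : 0 ≤ a) (hb : 0 ≤ b') :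
    |min 1 (a / A) - (if B = 0 then 1 else min 1 (b' / B))| * B
      ≤ |a - b'| + min 1 (a / A) * |A - B| := by
  rcases eq_or_lt_of_le hB with hB0 | hB0
  · rw [← hB0, mul_zero]
    positivity
  rw [if_neg hB0.ne']
  have e1 : min 1 (a / A) = min A a / A := by
    rcases le_total A a with h | h
    · rw [min_eq_left h, div_self hA.ne', min_eq_left ((one_le_div hA).2 h)]
    · rw [min_eq_right h, min_eq_right ((div_le_one hA).2 h)]
  have e2 : min 1 (b' / B) = min B b' / B := by
    rcases le_total B b' with h | h
    · rw [min_eq_left h, div_self hB0.ne', min_eq_left ((one_le_div hB0).2 h)]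
    · rw [min_eq_right h, min_eq_right ((div_le_one hB0).2 h)]
  rw [e1, e2, div_sub_div _ _ hA.ne' hB0.ne', abs_div, abs_of_pos (mul_pos hA hB0)]
  have key := lemA A B a b' hA.le hB ha hb
  rw [div_mul_eq_mul_div, div_le_iff₀ (mul_pos hA hB0)]
  have h2 : min A a * B - A * min B b' = B * min A a - A * min B b' := by ring
  rw [h2]
  calc |B * min A a - A * min B b'| * B ≤ (A * |a - b'| + min A a * |A - B|) * B :=
        mul_le_mul_of_nonneg_right key hB
    _ = (|a - b'| + min A a / A * |A - B|) * (A * B) := by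
        field_simp

noncomputable def phiAux (r s : ℝ) : ℝ := if s = 0 then 1 else min 1 (r / s)

lemma phiAux_nonneg (r s : ℝ) (hr : 0 ≤ r) (hs : 0 ≤ s) : 0 ≤ phiAux r s := by
  rw [phiAux]; split
  · norm_num
  · exact le_min zero_le_one (by positivity)

lemma phiAux_le_one (r s : ℝ) : phiAux r s ≤ 1 := by
  rw [phiAux]; split
  · exact le_refl 1
  · exact min_le_left _ _

lemma phiAux_le_div (r s : ℝ) (hs : s ≠ 0) : phiAux r s ≤ r / s := by
  rw [phiAux, if_neg hs]
  exact min_le_right _ _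

lemma phiAux_mul_le (r s : ℝ) (hr : 0 ≤ r) (hs : 0 ≤ s) : phiAux r s * s ≤ r := by
  rcases eq_or_lt_of_le hs with h | h
  · rw [← h, mul_zero]; exact hr
  · rw [← le_div_iff₀ h]
    exact phiAux_le_div r s h.ne'

lemma keyineq {F : Type*} [NormedAddCommGroup F] [NormedSpace ℂ F]
    (U V : F) (a b' D : ℝ) (ha : 0 ≤ a) (hb' : 0 ≤ b') (hD : |a - b'| ≤ D) :
    ‖((phiAux a ‖U‖ : ℝ) : ℂ) • U - ((phiAux b' ‖V‖ : ℝ) : ℂ) • V‖ ^ 2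
      ≤ 2 * D ^ 2 + 8 * ((if ‖U‖ = 0 then phiAux b' ‖V‖ else phiAux a ‖U‖) ^ 2
          * ‖U - V‖ ^ 2) := by
  have hD0 : 0 ≤ D := le_trans (abs_nonneg _) hD
  have hφU0 : 0 ≤ phiAux a ‖U‖ := phiAux_nonneg a ‖U‖ ha (norm_nonneg U)
  have hφV0 : 0 ≤ phiAux b' ‖V‖ := phiAux_nonneg b' ‖V‖ hb' (norm_nonneg V)
  set φU : ℝ := phiAux a ‖U‖ with hφU
  set φV : ℝ := phiAux b' ‖V‖ with hφV
  by_cases hA : ‖U‖ = 0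
  · have hU0 : U = 0 := norm_eq_zero.1 hA
    rw [if_pos hA]
    subst hU0
    rw [smul_zero, zero_sub, norm_neg, norm_smul, zero_sub, norm_neg]
    simp only [Complex.norm_real, Real.norm_eq_abs, abs_of_nonneg hφV0]
    nlinarith [norm_nonneg V, sq_nonneg (φV * ‖V‖)]
  · rw [if_neg hA]
    have hA0 : 0 < ‖U‖ := lt_of_le_of_ne (norm_nonneg U) (Ne.symm hA)
    have step1 : |φU - φV| * ‖V‖ ≤ |a - b'| + φU * |‖U‖ - ‖V‖| := by
      rw [hφU, hφV, phiAux, phiAux, if_neg hA]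
      exact lemB ‖U‖ ‖V‖ a b' hA0 (norm_nonneg V) ha hb'
    have decomp : (φU : ℂ) • U - (φV : ℂ) • V
        = (φU : ℂ) • (U - V) + ((φU - φV : ℝ) : ℂ) • V := by
      push_cast
      rw [smul_sub, sub_smul]
      abel
    have step2 : ‖(φU : ℂ) • U - (φV : ℂ) • V‖ ≤ φU * ‖U - V‖ + |φU - φV| * ‖V‖ := by
      rw [decomp]
      refine le_trans (norm_add_le _ _) ?_
      rw [norm_smul, norm_smul]
      simp only [Complex.norm_real, Real.norm_eq_abs, abs_of_nonneg hφU0, le_refl]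
    have step3 : ‖(φU : ℂ) • U - (φV : ℂ) • V‖ ≤ D + 2 * (φU * ‖U - V‖) := by
      refine le_trans step2 ?_
      have h4 : |‖U‖ - ‖V‖| ≤ ‖U - V‖ := abs_norm_sub_norm_le U V
      nlinarith [step1, hD]
    have hN0 : 0 ≤ ‖(φU : ℂ) • U - (φV : ℂ) • V‖ := norm_nonneg _
    nlinarith [mul_self_le_mul_self hN0 step3, sq_nonneg (D - 2 * (φU * ‖U - V‖)),
      norm_nonneg (U - V), mul_nonneg hφU0 (norm_nonneg (U - V)),
      sq_nonneg ‖(φU : ℂ) • U - (φV : ℂ) • V‖]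

open Filter in
lemma dct0 {α : Type*} {F : ℕ → α → ℝ} {G : α → ℝ} (hF0 : ∀ n x, 0 ≤ F n x)
    (hle : ∀ n x, F n x ≤ G x) (hG : Summable G)
    (h0 : ∀ x, Tendsto (fun n => F n x) atTop (nhds 0)) :
    Tendsto (fun n => ∑' x, ENNReal.ofReal (F n x)) atTop (nhds 0) := by
  have hsum : ∀ n, Summable (F n) := fun n => hG.of_nonneg_of_le (hF0 n) (hle n)
  have heq : ∀ n, ∑' x, ENNReal.ofReal (F n x) = ENNReal.ofReal (∑' x, F n x) := fun n =>
    (ENNReal.ofReal_tsum_of_nonneg (hF0 n) (hsum n)).symm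
  simp only [heq]
  have h1 : Tendsto (fun n => ∑' x, F n x) atTop (nhds (∑' x : α, (0 : ℝ))) := by
    apply tendsto_tsum_of_dominated_convergence hG h0
    filter_upwards with n x
    rw [Real.norm_eq_abs, abs_of_nonneg (hF0 n x)]
    exact hle n x
  rw [tsum_zero] at h1
  have h2 := (ENNReal.continuous_ofReal.tendsto 0).comp h1
  rw [ENNReal.ofReal_zero] at h2
  exact h2

end Aux

/-- For a weighted graph `(X,b,c,m)`, a Hermitian vector bundle `E` with
unitary connection `Φ` and a pointwise positive bundle endomorphism `W` with
`⟨W(x)v,v⟩ ≥ c(x)|v|²`: if the finitely supported functions are dense in the domain of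
`Q^(N)_{b,c}` with respect to its form norm (i.e. `Q^(D)_{b,c} = Q^(N)_{b,c}`), then the
finitely supported sections are dense in the domain of `Q^(N)_{Φ,b,W}` with respect to its
form norm (i.e. `Q^(D)_{Φ,b,W} = Q^(N)_{Φ,b,W}`). -/
theorem stmt2 {X : Type*} [Countable X]
    (b : X → X → ℝ) (hb0 : ∀ x y, 0 ≤ b x y) (hbdiag : ∀ x, b x x = 0)
    (hbsymm : ∀ x y, b x y = b y x) (hbsum : ∀ x, Summable fun y => b x y)
    (c : X → ℝ) (hc : ∀ x, 0 ≤ c x) (m : X → ℝ) (hm : ∀ x, 0 < m x)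
    (E : X → Type*) [∀ x, NormedAddCommGroup (E x)] [∀ x, InnerProductSpace ℂ (E x)]
    [∀ x, FiniteDimensional ℂ (E x)]
    (Φ : ∀ x y, E y ≃ₗᵢ[ℂ] E x) (hΦ : ∀ x y, Φ x y = (Φ y x).symm)
    (W : ∀ x, E x →ₗ[ℂ] E x) (hW : ∀ x (w : E x), c x * ‖w‖ ^ 2 ≤ (⟪W x w, w⟫).re)
    (hdense : ∀ f : X → ℂ, inScalDom m b c f → ∀ ε > (0 : ℝ),
      ∃ g : X → ℂ, (Function.support g).Finite ∧
        scalFormNormSq m b c (f - g) < ENNReal.ofReal ε) :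
    ∀ u : ∀ x, E x, inMagDom m b Φ W u → ∀ ε > (0 : ℝ),
      ∃ v : ∀ x, E x, {x | v x ≠ 0}.Finite ∧
        magFormNormSq m b Φ W (u - v) < ENNReal.ofReal ε := by
  intro u hu ε hε
  obtain ⟨hul2, humE⟩ := hu
  classical
  open Filter in
  -- the two pieces of the magnetic energy of `u` are finite
  have hhalf : (1 / 2 : ℝ≥0∞) ≠ 0 := by norm_num
  have hPairTop : (∑' p : X × X,
      ENNReal.ofReal (b p.1 p.2 * ‖u p.1 - Φ p.1 p.2 (u p.2)‖ ^ 2)) ≠ ⊤ := by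
    intro hS
    rw [magEnergy, hS, ENNReal.mul_top hhalf] at humE
    simp at humE
  have hWTop : (∑' x, ENNReal.ofReal (⟪W x (u x), u x⟫).re) ≠ ⊤ := by
    refine ne_top_of_le_ne_top humE.ne ?_
    exact le_add_self
  have hWnn : ∀ x, 0 ≤ (⟪W x (u x), u x⟫).re := fun x =>
    le_trans (mul_nonneg (hc x) (by positivity)) (hW x (u x))
  have hPairSummable : Summable (fun p : X × X =>
      b p.1 p.2 * ‖u p.1 - Φ p.1 p.2 (u p.2)‖ ^ 2) := by
    refine (ENNReal.summable_toReal hPairTop).congr fun p => ?_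
    rw [ENNReal.toReal_ofReal (mul_nonneg (hb0 _ _) (by positivity))]
  have hWSummable : Summable (fun x => (⟪W x (u x), u x⟫).re) := by
    refine (ENNReal.summable_toReal hWTop).congr fun x => ?_
    rw [ENNReal.toReal_ofReal (hWnn x)]
  -- the scalar function f = |u|
  set f : X → ℂ := fun x => (‖u x‖ : ℝ) with hf
  have hfnorm : ∀ x, ‖f x‖ = ‖u x‖ := fun x => by
    rw [hf]; simp [Complex.norm_real]
  have hfdom : inScalDom m b c f := by
    constructor
    · exact hul2.congr fun x => by rw [hfnorm x]
    · refine lt_of_le_of_lt ?_ humE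
      rw [scalEnergy, magEnergy]
      refine add_le_add (mul_le_mul_right (ENNReal.tsum_le_tsum fun p => ?_) _)
        (ENNReal.tsum_le_tsum fun x => ?_)
      · refine ENNReal.ofReal_le_ofReal ?_
        refine mul_le_mul_of_nonneg_left ?_ (hb0 _ _)
        have h1 : ‖f p.1 - f p.2‖ = |‖u p.1‖ - ‖u p.2‖| := by
          rw [hf]
          push_cast
          rw [← Complex.ofReal_sub, Complex.norm_real, Real.norm_eq_abs]
        have h2 : |‖u p.1‖ - ‖u p.2‖| ≤ ‖u p.1 - Φ p.1 p.2 (u p.2)‖ := by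
          have := abs_norm_sub_norm_le (u p.1) (Φ p.1 p.2 (u p.2))
          rwa [(Φ p.1 p.2).norm_map] at this
        rw [h1]
        exact pow_le_pow_left₀ (abs_nonneg _) h2 2
      · refine ENNReal.ofReal_le_ofReal ?_
        rw [hfnorm x]
        exact hW x (u x)
  -- choose the approximating scalar functions
  have hgs : ∀ n : ℕ, ∃ g : X → ℂ, (Function.support g).Finite ∧
      scalFormNormSq m b c (f - g) < ENNReal.ofReal (1 / (n + 1)) := fun n =>
    hdense f hfdom (1 / (n + 1)) (by positivity)
  choose g hgfin hglt using hgs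
  -- basic bounds from the scalar approximation
  have hL2 : ∀ n, (∑' x, ENNReal.ofReal (‖(f - g n) x‖ ^ 2 * m x))
      < ENNReal.ofReal (1 / (n + 1)) := fun n =>
    lt_of_le_of_lt le_self_add (hglt n)
  have hEn : ∀ n, (∑' p : X × X,
      ENNReal.ofReal (b p.1 p.2 * ‖(f - g n) p.1 - (f - g n) p.2‖ ^ 2))
      ≤ 2 * ENNReal.ofReal (1 / (n + 1)) := by
    intro n
    have h1 : (1 / 2 : ℝ≥0∞) * (∑' p : X × X,
        ENNReal.ofReal (b p.1 p.2 * ‖(f - g n) p.1 - (f - g n) p.2‖ ^ 2))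
        ≤ scalFormNormSq m b c (f - g n) := le_trans le_self_add le_add_self
    have h2 := le_of_lt (lt_of_le_of_lt h1 (hglt n))
    calc (∑' p : X × X,
        ENNReal.ofReal (b p.1 p.2 * ‖(f - g n) p.1 - (f - g n) p.2‖ ^ 2))
        = 2 * ((1 / 2 : ℝ≥0∞) * (∑' p : X × X,
          ENNReal.ofReal (b p.1 p.2 * ‖(f - g n) p.1 - (f - g n) p.2‖ ^ 2))) := by
          rw [← mul_assoc, one_div, ENNReal.mul_inv_cancel (by norm_num) (by norm_num),
            one_mul]
      _ ≤ 2 * ENNReal.ofReal (1 / (n + 1)) := mul_le_mul_right h2 2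
  -- pointwise convergence of h n = f - g n to 0
  have hpt : ∀ x, Tendsto (fun n => ‖(f - g n) x‖) atTop (nhds 0) := by
    intro x
    have hb2 : ∀ n : ℕ, ‖(f - g n) x‖ ^ 2 ≤ (1 / (n + 1)) * (1 / m x) := by
      intro n
      have h1 : ENNReal.ofReal (‖(f - g n) x‖ ^ 2 * m x)
          ≤ ∑' y, ENNReal.ofReal (‖(f - g n) y‖ ^ 2 * m y) := ENNReal.le_tsum x
      have h2 : ‖(f - g n) x‖ ^ 2 * m x < 1 / (n + 1) := by
        have h3 := lt_of_le_of_lt h1 (hL2 n)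
        rwa [ENNReal.ofReal_lt_ofReal_iff_of_nonneg
          (mul_nonneg (by positivity) (hm x).le)] at h3
      rw [div_eq_mul_one_div, one_mul] at h2 ⊢
      have h4 := (le_div_iff₀ (hm x)).2 h2.le
      rwa [div_eq_mul_one_div] at h4
    have hsq : Tendsto (fun n : ℕ => ‖(f - g n) x‖ ^ 2) atTop (nhds 0) := by
      refine squeeze_zero (fun n => by positivity) hb2 ?_
      have h5 := tendsto_one_div_add_atTop_nhds_zero_nat.mul_const (1 / m x)
      simpa using h5
    have h6 := (Real.continuous_sqrt.tendsto 0).comp hsq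
    simp only [Real.sqrt_zero] at h6
    refine h6.congr fun n => ?_
    simp only [Function.comp_apply]
    rw [Real.sqrt_sq (norm_nonneg _)]
  -- the truncation functions
  set φ : ℕ → X → ℝ := fun n x => phiAux ‖(f - g n) x‖ ‖u x‖ with hφdef
  set v : ℕ → ∀ x, E x := fun n x => u x - ((φ n x : ℝ) : ℂ) • u x with hvdef
  have hvx : ∀ n x, v n x = u x - ((φ n x : ℝ) : ℂ) • u x := fun n x => by rw [hvdef]
  have hφx : ∀ n x, φ n x = phiAux ‖(f - g n) x‖ ‖u x‖ := fun n x => by rw [hφdef]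
  have huv : ∀ n, u - v n = fun x => ((φ n x : ℝ) : ℂ) • u x := by
    intro n; funext x
    rw [Pi.sub_apply, hvx, sub_sub_cancel]
  have hφ0 : ∀ n x, 0 ≤ φ n x := fun n x => by
    rw [hφx]; exact phiAux_nonneg _ _ (norm_nonneg _) (norm_nonneg _)
  have hφ1 : ∀ n x, φ n x ≤ 1 := fun n x => by rw [hφx]; exact phiAux_le_one _ _
  have hφpt : ∀ x, ‖u x‖ ≠ 0 → Tendsto (fun n => φ n x) atTop (nhds 0) := by
    intro x hx
    refine squeeze_zero (g := fun n => ‖(f - g n) x‖ / ‖u x‖) (fun n => hφ0 n x)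
      (fun n => ?_) ?_
    · rw [hφx]; exact phiAux_le_div _ _ hx
    · have h7 := (hpt x).div_const ‖u x‖
      simpa using h7
  have hsupp : ∀ n, {x | v n x ≠ 0}.Finite := by
    intro n
    refine (hgfin n).subset fun x hx => ?_
    rw [Function.mem_support]
    intro hgx0
    apply hx
    show v n x = 0
    rw [hvx]
    by_cases h0 : ‖u x‖ = 0
    · have hu0 : u x = 0 := norm_eq_zero.1 h0
      rw [hu0, smul_zero, sub_zero]
    · have hfgx : ‖(f - g n) x‖ = ‖u x‖ := by
        rw [Pi.sub_apply, hgx0, sub_zero, hfnorm x]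
      have hφeq : φ n x = 1 := by
        rw [hφx, hfgx, phiAux, if_neg h0, div_self h0, min_self]
      rw [hφeq, Complex.ofReal_one, one_smul, sub_self]
  -- Part 1 : the ℓ² part tends to zero
  have hofε : Tendsto (fun n : ℕ => ENNReal.ofReal (1 / (n + 1 : ℝ))) atTop (nhds 0) := by
    have := ENNReal.tendsto_ofReal (f := atTop)
      (m := fun n : ℕ => 1 / ((n : ℝ) + 1)) (a := 0)
      tendsto_one_div_add_atTop_nhds_zero_nat
    simpa using this
  have tend1 : Tendsto (fun n => ∑' x,
      ENNReal.ofReal (‖((φ n x : ℝ) : ℂ) • u x‖ ^ 2 * m x)) atTop (nhds 0) := by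
    refine tendsto_of_tendsto_of_tendsto_of_le_of_le tendsto_const_nhds hofε
      (fun n => zero_le) (fun n => ?_)
    refine le_trans (ENNReal.tsum_le_tsum fun x => ?_) (hL2 n).le
    refine ENNReal.ofReal_le_ofReal (mul_le_mul_of_nonneg_right ?_ (hm x).le)
    have h1 : ‖((φ n x : ℝ) : ℂ) • u x‖ = φ n x * ‖u x‖ := by
      rw [norm_smul, Complex.norm_real, Real.norm_eq_abs, abs_of_nonneg (hφ0 n x)]
    rw [h1]
    have h3 : φ n x * ‖u x‖ ≤ ‖(f - g n) x‖ := by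
      rw [hφx]; exact phiAux_mul_le _ _ (norm_nonneg _) (norm_nonneg _)
    exact pow_le_pow_left₀ (mul_nonneg (hφ0 n x) (norm_nonneg _)) h3 2
  -- Part 3 : the potential part tends to zero
  have hWterm : ∀ n x, (⟪W x (((φ n x : ℝ) : ℂ) • u x), ((φ n x : ℝ) : ℂ) • u x⟫).re
      = φ n x ^ 2 * (⟪W x (u x), u x⟫).re := by
    intro n x
    rw [map_smul, inner_smul_left, inner_smul_right, Complex.conj_ofReal,
      ← mul_assoc, ← Complex.ofReal_mul, Complex.re_ofReal_mul]
    ring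
  have tend3 : Tendsto (fun n => ∑' x,
      ENNReal.ofReal (⟪W x (((φ n x : ℝ) : ℂ) • u x), ((φ n x : ℝ) : ℂ) • u x⟫).re)
      atTop (nhds 0) := by
    have heq : (fun n => ∑' x,
        ENNReal.ofReal (⟪W x (((φ n x : ℝ) : ℂ) • u x), ((φ n x : ℝ) : ℂ) • u x⟫).re)
        = fun n => ∑' x, ENNReal.ofReal (φ n x ^ 2 * (⟪W x (u x), u x⟫).re) :=
      funext fun n => tsum_congr fun x => by rw [hWterm]
    rw [heq]
    refine dct0 (fun n x => mul_nonneg (sq_nonneg _) (hWnn x)) (fun n x => ?_)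
      hWSummable (fun x => ?_)
    · have h9 : φ n x ^ 2 ≤ 1 := by nlinarith [hφ0 n x, hφ1 n x]
      nlinarith [hWnn x, h9]
    · by_cases h0 : ‖u x‖ = 0
      · have hu0 : u x = 0 := norm_eq_zero.1 h0
        simp [hu0]
      · have h1 := ((hφpt x h0).pow 2).mul_const ((⟪W x (u x), u x⟫).re)
        simpa using h1
  -- Part 2 : the gradient part tends to zero
  set π : ℕ → X × X → ℝ :=
    fun n p => if ‖u p.1‖ = 0 then φ n p.2 else φ n p.1 with hπdef
  have hπx : ∀ n p, π n p = if ‖u p.1‖ = 0 then φ n p.2 else φ n p.1 :=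
    fun n p => by rw [hπdef]
  have claim : ∀ n (p : X × X),
      b p.1 p.2 * ‖((φ n p.1 : ℝ) : ℂ) • u p.1
          - Φ p.1 p.2 (((φ n p.2 : ℝ) : ℂ) • u p.2)‖ ^ 2
      ≤ 2 * (b p.1 p.2 * ‖(f - g n) p.1 - (f - g n) p.2‖ ^ 2)
        + 8 * (π n p ^ 2 * (b p.1 p.2 * ‖u p.1 - Φ p.1 p.2 (u p.2)‖ ^ 2)) := by
    intro n p
    have hVn : ‖Φ p.1 p.2 (u p.2)‖ = ‖u p.2‖ := (Φ p.1 p.2).norm_map _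
    have key := keyineq (u p.1) (Φ p.1 p.2 (u p.2)) ‖(f - g n) p.1‖ ‖(f - g n) p.2‖
      ‖(f - g n) p.1 - (f - g n) p.2‖ (norm_nonneg _) (norm_nonneg _)
      (abs_norm_sub_norm_le _ _)
    rw [hVn] at key
    rw [hπx, hφx n p.1, hφx n p.2]
    have hrw1 : Φ p.1 p.2 (((phiAux ‖(f - g n) p.2‖ ‖u p.2‖ : ℝ) : ℂ) • u p.2)
        = ((phiAux ‖(f - g n) p.2‖ ‖u p.2‖ : ℝ) : ℂ) • Φ p.1 p.2 (u p.2) :=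
      (Φ p.1 p.2).map_smul _ _
    rw [hrw1]
    nlinarith [mul_le_mul_of_nonneg_left key (hb0 p.1 p.2)]
  have tendS2 : Tendsto (fun n => ∑' p : X × X,
      ENNReal.ofReal (8 * (π n p ^ 2 * (b p.1 p.2 * ‖u p.1 - Φ p.1 p.2 (u p.2)‖ ^ 2))))
      atTop (nhds 0) := by
    refine dct0 (F := fun n p => 8 * (π n p ^ 2 * (b p.1 p.2 * ‖u p.1 - Φ p.1 p.2 (u p.2)‖ ^ 2)))
      (G := fun p => 8 * (b p.1 p.2 * ‖u p.1 - Φ p.1 p.2 (u p.2)‖ ^ 2))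
      (fun n p => by have hbp := hb0 p.1 p.2; positivity) (fun n p => ?_) (hPairSummable.mul_left 8) (fun p => ?_)
    · have hπ0 : 0 ≤ π n p := by
        rw [hπx]; split
        · exact hφ0 n p.2
        · exact hφ0 n p.1
      have hπ1 : π n p ≤ 1 := by
        rw [hπx]; split
        · exact hφ1 n p.2
        · exact hφ1 n p.1
      have h1 : π n p ^ 2 ≤ 1 := by
        calc π n p ^ 2 ≤ 1 ^ 2 := pow_le_pow_left₀ hπ0 hπ1 2
          _ = 1 := one_pow 2
      have h2 : 0 ≤ b p.1 p.2 * ‖u p.1 - Φ p.1 p.2 (u p.2)‖ ^ 2 :=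
        mul_nonneg (hb0 _ _) (sq_nonneg _)
      nlinarith [mul_le_mul_of_nonneg_right h1 h2]
    · by_cases h1 : ‖u p.1‖ = 0
      · by_cases h2 : ‖u p.2‖ = 0
        · have hu1 : u p.1 = 0 := norm_eq_zero.1 h1
          have hu2 : u p.2 = 0 := norm_eq_zero.1 h2
          have : ∀ n : ℕ, 8 * (π n p ^ 2 * (b p.1 p.2 * ‖u p.1 - Φ p.1 p.2 (u p.2)‖ ^ 2))
              = 0 := by
            intro n
            rw [hu1, hu2]
            simp
          simp only [this]
          exact tendsto_const_nhds
        · have hπeq : ∀ n, π n p = φ n p.2 := fun n => by rw [hπx, if_pos h1]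
          simp only [hπeq]
          have h3 := (((hφpt p.2 h2).pow 2).mul_const
            (b p.1 p.2 * ‖u p.1 - Φ p.1 p.2 (u p.2)‖ ^ 2)).const_mul (8 : ℝ)
          simpa using h3
      · have hπeq : ∀ n, π n p = φ n p.1 := fun n => by rw [hπx, if_neg h1]
        simp only [hπeq]
        have h3 := (((hφpt p.1 h1).pow 2).mul_const
          (b p.1 p.2 * ‖u p.1 - Φ p.1 p.2 (u p.2)‖ ^ 2)).const_mul (8 : ℝ)
        simpa using h3
  have tend2 : Tendsto (fun n => (1 / 2 : ℝ≥0∞) * ∑' p : X × X,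
      ENNReal.ofReal (b p.1 p.2 * ‖((φ n p.1 : ℝ) : ℂ) • u p.1
        - Φ p.1 p.2 (((φ n p.2 : ℝ) : ℂ) • u p.2)‖ ^ 2)) atTop (nhds 0) := by
    have hub : ∀ n, (1 / 2 : ℝ≥0∞) * ∑' p : X × X,
        ENNReal.ofReal (b p.1 p.2 * ‖((φ n p.1 : ℝ) : ℂ) • u p.1
          - Φ p.1 p.2 (((φ n p.2 : ℝ) : ℂ) • u p.2)‖ ^ 2)
        ≤ 2 * (2 * ENNReal.ofReal (1 / (n + 1)))
          + ∑' p : X × X, ENNReal.ofReal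
            (8 * (π n p ^ 2 * (b p.1 p.2 * ‖u p.1 - Φ p.1 p.2 (u p.2)‖ ^ 2))) := by
      intro n
      have h1 : (∑' p : X × X,
          ENNReal.ofReal (b p.1 p.2 * ‖((φ n p.1 : ℝ) : ℂ) • u p.1
            - Φ p.1 p.2 (((φ n p.2 : ℝ) : ℂ) • u p.2)‖ ^ 2))
          ≤ (∑' p : X × X, ENNReal.ofReal
              (2 * (b p.1 p.2 * ‖(f - g n) p.1 - (f - g n) p.2‖ ^ 2)))
            + ∑' p : X × X, ENNReal.ofReal
              (8 * (π n p ^ 2 * (b p.1 p.2 * ‖u p.1 - Φ p.1 p.2 (u p.2)‖ ^ 2))) := by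
        rw [← ENNReal.tsum_add]
        refine ENNReal.tsum_le_tsum fun p => ?_
        refine le_trans (ENNReal.ofReal_le_ofReal (claim n p)) (ENNReal.ofReal_add_le)
      have h2 : (∑' p : X × X, ENNReal.ofReal
          (2 * (b p.1 p.2 * ‖(f - g n) p.1 - (f - g n) p.2‖ ^ 2)))
          = 2 * ∑' p : X × X, ENNReal.ofReal
            (b p.1 p.2 * ‖(f - g n) p.1 - (f - g n) p.2‖ ^ 2) := by
        rw [← ENNReal.tsum_mul_left]
        refine tsum_congr fun p => ?_
        rw [ENNReal.ofReal_mul (by norm_num)]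
        norm_num
      have h3 : (∑' p : X × X,
          ENNReal.ofReal (b p.1 p.2 * ‖((φ n p.1 : ℝ) : ℂ) • u p.1
            - Φ p.1 p.2 (((φ n p.2 : ℝ) : ℂ) • u p.2)‖ ^ 2))
          ≤ 2 * (2 * ENNReal.ofReal (1 / (n + 1)))
            + ∑' p : X × X, ENNReal.ofReal
              (8 * (π n p ^ 2 * (b p.1 p.2 * ‖u p.1 - Φ p.1 p.2 (u p.2)‖ ^ 2))) := by
        refine le_trans h1 ?_
        rw [h2]
        exact add_le_add_left (mul_le_mul_right (hEn n) 2) _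
      refine le_trans ?_ h3
      calc (1 / 2 : ℝ≥0∞) * ∑' p : X × X,
          ENNReal.ofReal (b p.1 p.2 * ‖((φ n p.1 : ℝ) : ℂ) • u p.1
            - Φ p.1 p.2 (((φ n p.2 : ℝ) : ℂ) • u p.2)‖ ^ 2)
          ≤ 1 * ∑' p : X × X,
          ENNReal.ofReal (b p.1 p.2 * ‖((φ n p.1 : ℝ) : ℂ) • u p.1
            - Φ p.1 p.2 (((φ n p.2 : ℝ) : ℂ) • u p.2)‖ ^ 2) :=
            mul_le_mul_left (by norm_num) _
        _ = _ := one_mul _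
    refine tendsto_of_tendsto_of_tendsto_of_le_of_le tendsto_const_nhds ?_
      (fun n => zero_le) hub
    have h4 : Tendsto (fun n : ℕ => 2 * (2 * ENNReal.ofReal (1 / (n + 1 : ℝ))))
        atTop (nhds 0) := by
      have h4a := ENNReal.Tendsto.const_mul hofε (Or.inr (by norm_num : (2:ℝ≥0∞) ≠ ⊤))
      rw [mul_zero] at h4a
      have h4b := ENNReal.Tendsto.const_mul h4a (Or.inr (by norm_num : (2:ℝ≥0∞) ≠ ⊤))
      rw [mul_zero] at h4b
      exact h4b
    have h5 := h4.add tendS2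
    simpa using h5
  -- assemble
  have hrw : ∀ n, magFormNormSq m b Φ W (u - v n)
      = (∑' x, ENNReal.ofReal (‖((φ n x : ℝ) : ℂ) • u x‖ ^ 2 * m x))
        + ((1 / 2 : ℝ≥0∞) * (∑' p : X × X,
            ENNReal.ofReal (b p.1 p.2 * ‖((φ n p.1 : ℝ) : ℂ) • u p.1
              - Φ p.1 p.2 (((φ n p.2 : ℝ) : ℂ) • u p.2)‖ ^ 2))
          + ∑' x, ENNReal.ofReal
              (⟪W x (((φ n x : ℝ) : ℂ) • u x), ((φ n x : ℝ) : ℂ) • u x⟫).re) := by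
    intro n
    rw [huv n]
    rfl
  have hmag : Tendsto (fun n => magFormNormSq m b Φ W (u - v n)) atTop (nhds 0) := by
    have h6 := tend1.add (tend2.add tend3)
    simp only [add_zero] at h6
    refine h6.congr fun n => (hrw n).symm
  have hev := hmag.eventually_lt_const (ENNReal.ofReal_pos.2 hε)
  obtain ⟨n, hn⟩ := hev.exists
  exact ⟨v n, hsupp n, hn⟩
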